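/- Let Q be a finite p-group with an automorphism ζ of order 3 satisfying C_Q(ζ) = 1, and suppose x, y ∈ Q lie in terms Q_i, Q_j of the lower central series respectively. Then [x, ζ(y)] ≡ [ζ(x), y] ≡ ζ²([x,y]) modulo Q_{i+j+1}. -/

import Mathlib

open Subgroup
open scoped IsMulCommutative commutatorElement

private lemma lcs_succ' {G : Type*} [Group G] (n : ℕ) :
    Subgroup.lowerCentralSeries (⊤ : Subgroup G) (n + 1) = ⁅Subgroup.lowerCentralSeries (⊤ : Subgroup G) n, (⊤ : Subgroup G)⁆ := rfl

private lemma three_sub {G : Type*} [Group G] (H₁ H₂ H₃ N : Subgroup G) [N.Normal]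
    (h1 : ⁅⁅H₂, H₃⁆, H₁⁆ ≤ N) (h2 : ⁅⁅H₃, H₁⁆, H₂⁆ ≤ N) : ⁅⁅H₁, H₂⁆, H₃⁆ ≤ N := by
  set π := QuotientGroup.mk' N with hπ
  have hb : ∀ K : Subgroup G, K.map π = ⊥ ↔ K ≤ N := by
    intro K
    rw [Subgroup.map_eq_bot_iff, QuotientGroup.ker_mk']
  have key := Subgroup.commutator_commutator_eq_bot_of_rotate
    (H₁ := H₁.map π) (H₂ := H₂.map π) (H₃ := H₃.map π) ?_ ?_
  · rw [← map_commutator, ← map_commutator, hb] at key; exact key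
  · rw [← map_commutator, ← map_commutator, hb]; exact h1
  · rw [← map_commutator, ← map_commutator, hb]; exact h2

private lemma lcs_comm {G : Type*} [Group G] :
    ∀ (j i : ℕ), ⁅Subgroup.lowerCentralSeries (⊤ : Subgroup G) i, Subgroup.lowerCentralSeries (⊤ : Subgroup G) j⁆ ≤ Subgroup.lowerCentralSeries (⊤ : Subgroup G) (i + j + 1) := by
  intro j
  induction j with
  | zero =>
    intro i
    rw [Subgroup.lowerCentralSeries_zero, ← lcs_succ']
  | succ j ih =>
    intro i
    rw [lcs_succ', Subgroup.commutator_comm]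
    refine three_sub _ _ _ _ ?_ ?_
    · rw [Subgroup.commutator_comm (⊤ : Subgroup G), ← lcs_succ']
      have := ih (i + 1)
      convert this using 2
      omega
    · have h0 : ⁅⁅Subgroup.lowerCentralSeries (⊤ : Subgroup G) i, Subgroup.lowerCentralSeries (⊤ : Subgroup G) j⁆, (⊤ : Subgroup G)⁆
          ≤ ⁅Subgroup.lowerCentralSeries (⊤ : Subgroup G) (i + j + 1), (⊤ : Subgroup G)⁆ :=
        Subgroup.commutator_mono (ih i) le_rfl
      rw [← lcs_succ'] at h0
      convert h0 using 2
      omega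

private lemma norm_one {G : Type*} [Group G] [Finite G] (ζ : MulAut G)
    (h3 : ∀ w : G, ζ (ζ (ζ w)) = w)
    (hfix : ∀ x : G, ζ x = x → x = 1) (z : G) : z * ζ z * ζ (ζ z) = 1 := by
  have hinj : Function.Injective (fun w : G => w⁻¹ * ζ w) := by
    intro a b hab
    simp only at hab
    have h1 : ζ (b * a⁻¹) = b * a⁻¹ := by
      rw [map_mul, map_inv]
      have := congrArg (fun t => b * t * (ζ a)⁻¹) hab
      simpa [mul_assoc] using this.symm
    have h2 : b * a⁻¹ = 1 := hfix _ h1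
    rw [mul_inv_eq_one] at h2
    exact h2.symm
  obtain ⟨w, hw⟩ := (Finite.injective_iff_surjective.mp hinj) z
  simp only at hw
  subst hw
  simp only [map_mul, map_inv, h3]
  group

private lemma card_mod3 {G : Type*} [Group G] [Finite G] (ζ : MulAut G) (hord : orderOf ζ = 3)
    (hfix : ∀ x : G, ζ x = x → x = 1) : Nat.card G ≡ 1 [MOD 3] := by
  have hfact : Fact (Nat.Prime 3) := ⟨by norm_num⟩
  set H : Subgroup (MulAut G) := Subgroup.zpowers ζ with hH
  have hp : IsPGroup 3 H := IsPGroup.of_card (n := 1) (by rw [Nat.card_zpowers, hord, pow_one])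
  have hmod := hp.card_modEq_card_fixedPoints G
  have hfp : MulAction.fixedPoints H G = {1} := by
    ext q
    simp only [MulAction.mem_fixedPoints, Set.mem_singleton_iff]
    constructor
    · intro h
      exact hfix q (h ⟨ζ, Subgroup.mem_zpowers ζ⟩)
    · rintro rfl g
      show (g : MulAut G) 1 = 1
      exact map_one _
  rw [hfp] at hmod
  simpa using hmod

private lemma kill3 {G : Type*} [Group G]
    (hno3 : ¬ (3 ∣ Nat.card G)) (g : G) (hg : g * g * g = 1) : g = 1 := by
  have hg' : g ^ 3 = 1 := by rw [pow_succ, pow_succ, pow_one]; exact hg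
  have h1 : orderOf g ∣ 3 := orderOf_dvd_of_pow_eq_one hg'
  rcases (Nat.prime_three).eq_one_or_self_of_dvd _ h1 with h | h
  · exact orderOf_eq_one_iff.mp h
  · exfalso
    apply hno3
    rw [← h]
    exact orderOf_dvd_natCard g

private lemma comb1 {A : Type*} [AddCommGroup A]
    (a00 a01 a02 a10 a11 a12 a20 a21 a22 : A)
    (hR1 : a12 + a11 + a10 = 0) (hR2 : a22 + a21 + a20 = 0)
    (hC0 : a00 + a10 + a20 = 0) (hC1 : a01 + a11 + a21 = 0)
    (hD0 : a00 + a11 + a22 = 0) (hD1 : a01 + a12 + a20 = 0) :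
    (a01 - a10) + (a01 - a10) + (a01 - a10) = 0 := by
  have h : (a01 - a10) + (a01 - a10) + (a01 - a10)
      = ((a01 + a11 + a21) + (a00 + a11 + a22) + ((a01 + a12 + a20) + (a01 + a12 + a20)))
        - ((a12 + a11 + a10) + (a12 + a11 + a10) + (a22 + a21 + a20) + (a00 + a10 + a20)) := by
    abel
  rw [hR1, hR2, hC0, hC1, hD0, hD1] at h
  simpa using h

private lemma comb2 {A : Type*} [AddCommGroup A]
    (a00 a01 a02 a10 a11 a12 a20 a21 a22 : A)
    (hR1 : a12 + a11 + a10 = 0) (hR2 : a22 + a21 + a20 = 0)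
    (hC1 : a01 + a11 + a21 = 0) (hC2 : a02 + a12 + a22 = 0)
    (hD1 : a01 + a12 + a20 = 0) (hD2 : a02 + a10 + a21 = 0) :
    (a10 - a22) + (a10 - a22) + (a10 - a22) = 0 := by
  have h : (a10 - a22) + (a10 - a22) + (a10 - a22)
      = ((a12 + a11 + a10) + (a01 + a12 + a20) + ((a02 + a10 + a21) + (a02 + a10 + a21)))
        - ((a22 + a21 + a20) + (a01 + a11 + a21) + ((a02 + a12 + a22) + (a02 + a12 + a22))) := by
    abel
  rw [hR1, hR2, hC1, hC2, hD1, hD2] at h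
  simpa using h

private def cc {G : Type*} [Group G] (a b : G) : G := a⁻¹ * b⁻¹ * a * b

/-- If a finite `p`-group `Q` has an automorphism `ζ` of order 3 with trivial
fixed points, `x ∈ Q_{i+1}` and `y ∈ Q_{j+1}` (terms of the lower central
series, `Q_{k+1} = Subgroup.lowerCentralSeries (⊤ : Subgroup Q) k`), then
`[x, ζ(y)] ≡ [ζ(x), y] ≡ ζ²([x,y])` modulo `Q_{(i+1)+(j+1)+1} = Subgroup.lowerCentralSeries (⊤ : Subgroup Q) (i+j+2)`,
where `[x,y] = x⁻¹y⁻¹xy`. -/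
theorem stmt19 {Q : Type*} [Group Q] [Finite Q] {p : ℕ} (hp : p.Prime)
    (hQ : IsPGroup p Q) (ζ : MulAut Q) (hord : orderOf ζ = 3)
    (hfix : ∀ x : Q, ζ x = x → x = 1) (i j : ℕ) (x y : Q)
    (hx : x ∈ Subgroup.lowerCentralSeries (⊤ : Subgroup Q) i) (hy : y ∈ Subgroup.lowerCentralSeries (⊤ : Subgroup Q) j) :
    (x⁻¹ * (ζ y)⁻¹ * x * ζ y) * ((ζ x)⁻¹ * y⁻¹ * ζ x * y)⁻¹ ∈
        Subgroup.lowerCentralSeries (⊤ : Subgroup Q) (i + j + 2) ∧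
    ((ζ x)⁻¹ * y⁻¹ * ζ x * y) * (ζ (ζ (x⁻¹ * y⁻¹ * x * y)))⁻¹ ∈
        Subgroup.lowerCentralSeries (⊤ : Subgroup Q) (i + j + 2) := by
  -- ζ has order 3
  have h3 : ∀ w : Q, ζ (ζ (ζ w)) = w := by
    have hpow : ζ ^ 3 = 1 := by rw [← hord]; exact pow_orderOf_eq_one ζ
    intro w
    have h := congrArg (fun f : MulAut Q => f w) hpow
    simpa [pow_succ, MulAut.mul_apply] using h
  have hnorm : ∀ z : Q, z * ζ z * ζ (ζ z) = 1 := norm_one ζ h3 hfix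
  -- ζ preserves lower central series
  have hζi : ∀ {n : ℕ} {a : Q}, a ∈ Subgroup.lowerCentralSeries (⊤ : Subgroup Q) n → ζ a ∈ Subgroup.lowerCentralSeries (⊤ : Subgroup Q) n :=
    fun {n} {a} ha => Subgroup.lowerCentralSeries.map ζ.toMonoidHom n ⟨a, ha, rfl⟩
  -- quotient setup
  haveI hKn : (Subgroup.lowerCentralSeries (⊤ : Subgroup Q) (i + j + 2)).Normal := Subgroup.lowerCentralSeries_normal _ _
  set π : Q →* Q ⧸ Subgroup.lowerCentralSeries (⊤ : Subgroup Q) (i + j + 2) :=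
    QuotientGroup.mk' (Subgroup.lowerCentralSeries (⊤ : Subgroup Q) (i + j + 2)) with hπ
  have hno3 : ¬ (3 ∣ Nat.card (Q ⧸ Subgroup.lowerCentralSeries (⊤ : Subgroup Q) (i + j + 2))) := by
    intro hdvd
    have h1 : (3 : ℕ) ∣ Nat.card Q :=
      hdvd.trans (Subgroup.card_quotient_dvd_card _)
    have h2 := card_mod3 ζ hord hfix
    unfold Nat.ModEq at h2
    omega
  -- commutator membership
  have hccmem : ∀ {a b : Q}, a ∈ Subgroup.lowerCentralSeries (⊤ : Subgroup Q) i → b ∈ Subgroup.lowerCentralSeries (⊤ : Subgroup Q) j →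
      cc a b ∈ Subgroup.lowerCentralSeries (⊤ : Subgroup Q) (i + j + 1) := by
    intro a b ha hb
    have h1 : cc a b = ⁅a⁻¹, b⁻¹⁆ := by simp [cc, commutatorElement_def]
    rw [h1]
    exact lcs_comm j i (Subgroup.commutator_mem_commutator (inv_mem ha) (inv_mem hb))
  -- centrality
  have hcen : ∀ {t : Q}, t ∈ Subgroup.lowerCentralSeries (⊤ : Subgroup Q) (i + j + 1) →
      π t ∈ Subgroup.center (Q ⧸ Subgroup.lowerCentralSeries (⊤ : Subgroup Q) (i + j + 2)) := by
    intro t ht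
    rw [Subgroup.mem_center_iff]
    intro g
    obtain ⟨s, rfl⟩ := QuotientGroup.mk'_surjective (Subgroup.lowerCentralSeries (⊤ : Subgroup Q) (i + j + 2)) g
    have hmem : t⁻¹ * s⁻¹ * t * s ∈ Subgroup.lowerCentralSeries (⊤ : Subgroup Q) (i + j + 2) := by
      have h1 : ⁅t⁻¹, s⁻¹⁆ ∈ ⁅Subgroup.lowerCentralSeries (⊤ : Subgroup Q) (i + j + 1), (⊤ : Subgroup Q)⁆ :=
        Subgroup.commutator_mem_commutator (inv_mem ht) (Subgroup.mem_top _)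
      rw [← lcs_succ'] at h1
      have h2 : t⁻¹ * s⁻¹ * t * s = ⁅t⁻¹, s⁻¹⁆ := by simp [commutatorElement_def]
      rw [h2, show i + j + 2 = i + j + 1 + 1 by omega]
      exact h1
    have h := (QuotientGroup.eq_one_iff _).mpr hmem
    have h' : π (t⁻¹ * s⁻¹ * t * s) = 1 := h
    simp only [map_mul, map_inv] at h'
    have h2 := congrArg (fun u => π s * π t * u) h'
    simp only [mul_one] at h2
    rw [show π s * π t * ((π t)⁻¹ * (π s)⁻¹ * π t * π s) = π t * π s by group] at h2
    exact h2.symm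
  -- bilinearity
  have bilR : ∀ (a b d : Q), a ∈ Subgroup.lowerCentralSeries (⊤ : Subgroup Q) i → b ∈ Subgroup.lowerCentralSeries (⊤ : Subgroup Q) j →
      π (cc a (b * d)) = π (cc a d) * π (cc a b) := by
    intro a b d ha hb
    have hid : cc a (b * d) = (cc a d) * (d⁻¹ * (cc a b) * d) := by
      simp only [cc]; group
    rw [hid]
    simp only [map_mul, map_inv]
    have hc := Subgroup.mem_center_iff.mp (hcen (hccmem ha hb)) (π d)
    rw [show (π d)⁻¹ * π (cc a b) * π d = (π d)⁻¹ * (π d * π (cc a b)) by rw [hc]; group,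
      inv_mul_cancel_left]
  have bilL : ∀ (a e b : Q), a ∈ Subgroup.lowerCentralSeries (⊤ : Subgroup Q) i → b ∈ Subgroup.lowerCentralSeries (⊤ : Subgroup Q) j →
      π (cc (a * e) b) = π (cc a b) * π (cc e b) := by
    intro a e b ha hb
    have hid : cc (a * e) b = (e⁻¹ * (cc a b) * e) * (cc e b) := by
      simp only [cc]; group
    rw [hid]
    simp only [map_mul, map_inv]
    have hc := Subgroup.mem_center_iff.mp (hcen (hccmem ha hb)) (π e)
    rw [show (π e)⁻¹ * π (cc a b) * π e = (π e)⁻¹ * (π e * π (cc a b)) by rw [hc]; group,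
      inv_mul_cancel_left]
  -- memberships of the translates
  have hx1 : ζ x ∈ Subgroup.lowerCentralSeries (⊤ : Subgroup Q) i := hζi hx
  have hx2 : ζ (ζ x) ∈ Subgroup.lowerCentralSeries (⊤ : Subgroup Q) i := hζi hx1
  have hy1 : ζ y ∈ Subgroup.lowerCentralSeries (⊤ : Subgroup Q) j := hζi hy
  have hy2 : ζ (ζ y) ∈ Subgroup.lowerCentralSeries (⊤ : Subgroup Q) j := hζi hy1
  -- rows
  have row : ∀ (a : Q), a ∈ Subgroup.lowerCentralSeries (⊤ : Subgroup Q) i →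
      π (cc a (ζ (ζ y))) * (π (cc a (ζ y)) * π (cc a y)) = 1 := by
    intro a ha
    have h0 : π (cc a (y * ζ y * ζ (ζ y))) = 1 := by
      rw [hnorm y]; simp [cc]; exact map_one π
    rw [bilR a (y * ζ y) (ζ (ζ y)) ha (mul_mem hy hy1),
        bilR a y (ζ y) ha hy] at h0
    exact h0
  -- columns
  have col : ∀ (b : Q), b ∈ Subgroup.lowerCentralSeries (⊤ : Subgroup Q) j →
      π (cc x b) * π (cc (ζ x) b) * π (cc (ζ (ζ x)) b) = 1 := by
    intro b hb
    have h0 : π (cc (x * ζ x * ζ (ζ x)) b) = 1 := by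
      rw [hnorm x]; simp [cc]; exact map_one π
    rw [bilL (x * ζ x) (ζ (ζ x)) b (mul_mem hx hx1) hb,
        bilL x (ζ x) b hx hb] at h0
    exact h0
  -- diagonals
  have diag : ∀ a b : Q,
      π (cc a b) * π (cc (ζ a) (ζ b)) * π (cc (ζ (ζ a)) (ζ (ζ b))) = 1 := by
    intro a b
    have h0 : π (cc a b * ζ (cc a b) * ζ (ζ (cc a b))) = 1 := by
      rw [hnorm (cc a b)]; exact map_one π
    have e1 : ζ (cc a b) = cc (ζ a) (ζ b) := by simp [cc]
    have e2 : ζ (ζ (cc a b)) = cc (ζ (ζ a)) (ζ (ζ b)) := by simp [cc]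
    rw [map_mul, map_mul, e2, e1] at h0
    exact h0
  -- the nine central elements
  let Z := Subgroup.center (Q ⧸ Subgroup.lowerCentralSeries (⊤ : Subgroup Q) (i + j + 2))
  let U00 : ↥Z := ⟨π (cc x y), hcen (hccmem hx hy)⟩
  let U01 : ↥Z := ⟨π (cc x (ζ y)), hcen (hccmem hx hy1)⟩
  let U02 : ↥Z := ⟨π (cc x (ζ (ζ y))), hcen (hccmem hx hy2)⟩
  let U10 : ↥Z := ⟨π (cc (ζ x) y), hcen (hccmem hx1 hy)⟩
  let U11 : ↥Z := ⟨π (cc (ζ x) (ζ y)), hcen (hccmem hx1 hy1)⟩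
  let U12 : ↥Z := ⟨π (cc (ζ x) (ζ (ζ y))), hcen (hccmem hx1 hy2)⟩
  let U20 : ↥Z := ⟨π (cc (ζ (ζ x)) y), hcen (hccmem hx2 hy)⟩
  let U21 : ↥Z := ⟨π (cc (ζ (ζ x)) (ζ y)), hcen (hccmem hx2 hy1)⟩
  let U22 : ↥Z := ⟨π (cc (ζ (ζ x)) (ζ (ζ y))), hcen (hccmem hx2 hy2)⟩
  have R1 : U12 * U11 * U10 = 1 := by
    apply Subtype.ext
    show π (cc (ζ x) (ζ (ζ y))) * π (cc (ζ x) (ζ y)) * π (cc (ζ x) y) = 1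
    rw [mul_assoc]; exact row (ζ x) hx1
  have R2 : U22 * U21 * U20 = 1 := by
    apply Subtype.ext
    show π (cc (ζ (ζ x)) (ζ (ζ y))) * π (cc (ζ (ζ x)) (ζ y)) * π (cc (ζ (ζ x)) y) = 1
    rw [mul_assoc]; exact row (ζ (ζ x)) hx2
  have C0 : U00 * U10 * U20 = 1 := by
    apply Subtype.ext
    show π (cc x y) * π (cc (ζ x) y) * π (cc (ζ (ζ x)) y) = 1
    exact col y hy
  have C1 : U01 * U11 * U21 = 1 := by
    apply Subtype.ext
    show π (cc x (ζ y)) * π (cc (ζ x) (ζ y)) * π (cc (ζ (ζ x)) (ζ y)) = 1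
    exact col (ζ y) hy1
  have C2 : U02 * U12 * U22 = 1 := by
    apply Subtype.ext
    show π (cc x (ζ (ζ y))) * π (cc (ζ x) (ζ (ζ y))) * π (cc (ζ (ζ x)) (ζ (ζ y))) = 1
    exact col (ζ (ζ y)) hy2
  have D0 : U00 * U11 * U22 = 1 := by
    apply Subtype.ext
    show π (cc x y) * π (cc (ζ x) (ζ y)) * π (cc (ζ (ζ x)) (ζ (ζ y))) = 1
    exact diag x y
  have D1 : U01 * U12 * U20 = 1 := by
    apply Subtype.ext
    have hD := diag x (ζ y)
    rw [h3 y] at hD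
    exact hD
  have D2 : U02 * U10 * U21 = 1 := by
    apply Subtype.ext
    have hD := diag x (ζ (ζ y))
    rw [h3 y] at hD
    exact hD
  -- additive combinations
  have key1 := comb1 (Additive.ofMul U00) (Additive.ofMul U01) (Additive.ofMul U02)
      (Additive.ofMul U10) (Additive.ofMul U11) (Additive.ofMul U12)
      (Additive.ofMul U20) (Additive.ofMul U21) (Additive.ofMul U22)
      (congrArg Additive.ofMul R1) (congrArg Additive.ofMul R2)
      (congrArg Additive.ofMul C0) (congrArg Additive.ofMul C1)
      (congrArg Additive.ofMul D0) (congrArg Additive.ofMul D1)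
  have key2 := comb2 (Additive.ofMul U00) (Additive.ofMul U01) (Additive.ofMul U02)
      (Additive.ofMul U10) (Additive.ofMul U11) (Additive.ofMul U12)
      (Additive.ofMul U20) (Additive.ofMul U21) (Additive.ofMul U22)
      (congrArg Additive.ofMul R1) (congrArg Additive.ofMul R2)
      (congrArg Additive.ofMul C1) (congrArg Additive.ofMul C2)
      (congrArg Additive.ofMul D1) (congrArg Additive.ofMul D2)
  have hd1 : (U01 / U10) * (U01 / U10) * (U01 / U10) = 1 := by
    have h0 : Additive.ofMul ((U01 / U10) * (U01 / U10) * (U01 / U10)) = 0 := by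
      rw [ofMul_mul, ofMul_mul, ofMul_div]; exact key1
    exact ofMul_eq_zero.mp h0
  have hd2 : (U10 / U22) * (U10 / U22) * (U10 / U22) = 1 := by
    have h0 : Additive.ofMul ((U10 / U22) * (U10 / U22) * (U10 / U22)) = 0 := by
      rw [ofMul_mul, ofMul_mul, ofMul_div]; exact key2
    exact ofMul_eq_zero.mp h0
  have hd1Q : (π (cc x (ζ y)) / π (cc (ζ x) y)) * (π (cc x (ζ y)) / π (cc (ζ x) y))
      * (π (cc x (ζ y)) / π (cc (ζ x) y)) = 1 := congrArg Subtype.val hd1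
  have hd2Q : (π (cc (ζ x) y) / π (cc (ζ (ζ x)) (ζ (ζ y))))
      * (π (cc (ζ x) y) / π (cc (ζ (ζ x)) (ζ (ζ y))))
      * (π (cc (ζ x) y) / π (cc (ζ (ζ x)) (ζ (ζ y)))) = 1 := congrArg Subtype.val hd2
  have e1 := kill3 hno3 _ hd1Q
  have e2 := kill3 hno3 _ hd2Q
  rw [div_eq_one] at e1 e2
  constructor
  · refine (QuotientGroup.eq_one_iff _).mp ?_
    show π ((cc x (ζ y)) * (cc (ζ x) y)⁻¹) = 1
    rw [map_mul, map_inv, e1, mul_inv_cancel]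
  · refine (QuotientGroup.eq_one_iff _).mp ?_
    have hζζ : ζ (ζ (x⁻¹ * y⁻¹ * x * y)) = cc (ζ (ζ x)) (ζ (ζ y)) := by
      simp [cc]
    show π ((cc (ζ x) y) * (ζ (ζ (x⁻¹ * y⁻¹ * x * y)))⁻¹) = 1
    rw [hζζ, map_mul, map_inv, e2, mul_inv_cancel]
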